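/- arXiv:2505.19520 — 3 statements merged into one kernel-verified Lean document; each statement's English description precedes it below -/
import Mathlib

section
/- Let A be a set of at least four alternatives, let D ⊆ L(A) be a domain, and let a ∈ A. If D is connected, then the restricted domain D_{-a} = D_{A∖{a}} is connected. -/
/-!
Common definitions for formalizing Condorcet domains.

A linear order on a finite set `A : Finset α` of alternatives is encoded as a
duplicate-free list enumerating the elements of `A` from most preferred (head)
to least preferred (last).
-/

variable {α : Type*}

/-- `l` is a linear order on the finite set `A` of alternatives. -/
def IsLinOrd [DecidableEq α] (A : Finset α) (l : List α) : Prop :=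
  l.Nodup ∧ l.toFinset = A

/-- The restriction of a linear order `l` to the subset `S` of alternatives. -/
def restrictOrd [DecidableEq α] (l : List α) (S : Finset α) : List α :=
  l.filter (fun x => decide (x ∈ S))

/-- The restriction of a domain `D` to the subset `S` of alternatives. -/
def restrictDom [DecidableEq α] (D : Set (List α)) (S : Finset α) : Set (List α) :=
  (fun l => restrictOrd l S) '' D

/-- The never-condition `x N (k+1)`: no linear order in `E` ranks `x` in
position `k+1` (positions are counted from `1`, so `k : Fin 3` is the
zero-based index).  `k = 0` is a never-top condition, `k = 2` a never-bottom
condition. -/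
def NeverCond (E : Set (List α)) (x : α) (k : Fin 3) : Prop :=
  ∀ l ∈ E, l[(k : ℕ)]? ≠ some x

/-- The set of never-conditions (encoded as pairs `(x, k)`) satisfied by a
domain `E` on the triple `T`. -/
def NeverConds (T : Finset α) (E : Set (List α)) : Set (α × Fin 3) :=
  {p | p.1 ∈ T ∧ NeverCond E p.1 p.2}

/-- The set of peak-pit conditions (never-top or never-bottom conditions)
satisfied by a domain `E` on the triple `T`. -/
def PeakPitConds (T : Finset α) (E : Set (List α)) : Set (α × Fin 3) :=
  {p | p.1 ∈ T ∧ (p.2 = 0 ∨ p.2 = 2) ∧ NeverCond E p.1 p.2}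

/-- `D` is a Condorcet domain on `A`: a set of linear orders on `A` whose
restriction to every triple of distinct alternatives satisfies some
never-condition. -/
def IsCondorcetDomain [DecidableEq α] (A : Finset α) (D : Set (List α)) : Prop :=
  (∀ l ∈ D, IsLinOrd A l) ∧
    ∀ a b c : α, a ∈ A → b ∈ A → c ∈ A → a ≠ b → a ≠ c → b ≠ c →
      ∃ x ∈ ({a, b, c} : Finset α), ∃ k : Fin 3,
        NeverCond (restrictDom D {a, b, c}) x k

/-- `D` is a peak-pit Condorcet domain on `A`: a set of linear orders on `A`
whose restriction to every triple of distinct alternatives satisfies a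
never-top or a never-bottom condition. -/
def IsPeakPitDomain [DecidableEq α] (A : Finset α) (D : Set (List α)) : Prop :=
  (∀ l ∈ D, IsLinOrd A l) ∧
    ∀ a b c : α, a ∈ A → b ∈ A → c ∈ A → a ≠ b → a ≠ c → b ≠ c →
      ∃ x ∈ ({a, b, c} : Finset α),
        NeverCond (restrictDom D {a, b, c}) x 0 ∨
          NeverCond (restrictDom D {a, b, c}) x 2

/-- Two linear orders are alike if they differ by a swap of two adjacent
alternatives. -/
def Alike (R T : List α) : Prop :=
  ∃ (l₁ l₂ : List α) (x y : α), x ≠ y ∧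
    R = l₁ ++ x :: y :: l₂ ∧ T = l₁ ++ y :: x :: l₂

/-- `P` is a path of alike linear orders on `L(A)`. -/
def IsPathOn [DecidableEq α] (A : Finset α) (P : List (List α)) : Prop :=
  P ≠ [] ∧ (∀ l ∈ P, IsLinOrd A l) ∧ P.Chain' Alike

/-- `P` is a path of alike linear orders on `L(A)` connecting `R` and `T`. -/
def IsPath [DecidableEq α] (A : Finset α) (P : List (List α)) (R T : List α) : Prop :=
  IsPathOn A P ∧ P.head? = some R ∧ P.getLast? = some T

/-- `P` is a geodesic on `L(A)` connecting `R` and `T`: a path of alike linear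
orders of minimal length among all such paths. -/
def IsGeodesic [DecidableEq α] (A : Finset α) (P : List (List α)) (R T : List α) : Prop :=
  IsPath A P R T ∧ ∀ Q : List (List α), IsPath A Q R T → P.length ≤ Q.length

/-- The switching pair of alternatives between two alike linear orders (as an
unordered pair); `none` if the two lists do not differ. -/
def switchPair? [DecidableEq α] (R T : List α) : Option (Sym2 α) :=
  ((R.zip T).find? (fun p => decide (p.1 ≠ p.2))).map (fun p => Sym2.mk p.1 p.2)

/-- `S(P)`: the sequence of switching pairs of a path of alike linear orders. -/
def switchSeq [DecidableEq α] (P : List (List α)) : List (Sym2 α) :=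
  (P.zip P.tail).filterMap (fun p => switchPair? p.1 p.2)

/-- The restriction of a path to the subset `B`: restrict every member and
remove consecutive duplicates. -/
def restrictPath [DecidableEq α] (P : List (List α)) (B : Finset α) : List (List α) :=
  (P.map (fun l => restrictOrd l B)).destutter (· ≠ ·)

/-- `D` is connected: any two of its members are joined by a path of alike
linear orders lying entirely in `D`. -/
def ConnectedDomain [DecidableEq α] (A : Finset α) (D : Set (List α)) : Prop :=
  ∀ R ∈ D, ∀ T ∈ D, ∃ P : List (List α), IsPath A P R T ∧ ∀ l ∈ P, l ∈ D

/-- `D` is directly connected: any two of its members are joined by a geodesic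
lying entirely in `D`. -/
def DirectlyConnectedDomain [DecidableEq α] (A : Finset α) (D : Set (List α)) : Prop :=
  ∀ R ∈ D, ∀ T ∈ D, ∃ P : List (List α), IsGeodesic A P R T ∧ ∀ l ∈ P, l ∈ D

/-- Two unordered pairs of alternatives are disjoint. -/
def DisjointPair (p q : Sym2 α) : Prop := ∀ x : α, x ∈ p → x ∉ q

/-- One swap of an adjacent disjoint pair of switching pairs in a sequence of
switching pairs. -/
inductive AdjSwap : List (Sym2 α) → List (Sym2 α) → Prop
  | swap (l₁ l₂ : List (Sym2 α)) (p q : Sym2 α) (h : DisjointPair p q) :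
      AdjSwap (l₁ ++ p :: q :: l₂) (l₁ ++ q :: p :: l₂)

/-- Two paths are equivalent if their sequences of switching pairs differ by a
finite number of swaps of adjacent disjoint pairs of switching pairs. -/
def PathEquiv [DecidableEq α] (P Q : List (List α)) : Prop :=
  Relation.ReflTransGen AdjSwap (switchSeq P) (switchSeq Q)

/-- Two domains are isomorphic if some bijection between the underlying sets of
alternatives maps one domain onto the other (acting position-wise on linear
orders). -/
def DomIsomorphic (A B : Finset α) (D E : Set (List α)) : Prop :=
  ∃ f : α → α, Set.BijOn f ↑A ↑B ∧ E = (fun l => l.map f) '' D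

lemma isLinOrd_restrict [DecidableEq α] {A : Finset α} {l : List α} (h : IsLinOrd A l)
    (a : α) : IsLinOrd (A.erase a) (restrictOrd l (A.erase a)) := by
  obtain ⟨hnd, hts⟩ := h
  refine ⟨hnd.filter _, ?_⟩
  ext x
  simp only [restrictOrd, List.mem_toFinset, List.mem_filter, Finset.mem_erase, ← hts,
    decide_eq_true_eq]
  tauto

lemma alike_restrict [DecidableEq α] {R T : List α} (S : Finset α) (h : Alike R T) :
    restrictOrd R S = restrictOrd T S ∨ Alike (restrictOrd R S) (restrictOrd T S) := by
  obtain ⟨l₁, l₂, x, y, hxy, hR, hT⟩ := h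
  subst hR; subst hT
  by_cases hx : x ∈ S <;> by_cases hy : y ∈ S <;>
    simp only [restrictOrd, List.filter_append, List.filter_cons, hx, hy, decide_eq_true_eq,
      if_true, if_false, ite_true, ite_false]
  · right; exact ⟨_, _, x, y, hxy, rfl, rfl⟩
  · left; simp [hx, hy]
  · left; simp [hx, hy]
  · left; simp [hx, hy]

lemma path_collapse : ∀ (P : List (List α)),
    P.Chain' (fun x y => x = y ∨ Alike x y) → P ≠ [] →
    ∃ Q : List (List α), Q ≠ [] ∧ Q.Chain' Alike ∧ Q.head? = P.head? ∧
      Q.getLast? = P.getLast? ∧ ∀ l ∈ Q, l ∈ P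
  | [], _, h => absurd rfl h
  | [x], _, _ => ⟨[x], by simp, List.isChain_singleton _, rfl, rfl, by simp⟩
  | x :: y :: rest, hch, _ => by
    have h1 : x = y ∨ Alike x y := (List.isChain_cons_cons.mp hch).1
    obtain ⟨Q, hQne, hQch, hQh, hQl, hQm⟩ :=
      path_collapse (y :: rest) (List.isChain_cons_cons.mp hch).2 (by simp)
    rcases h1 with rfl | h1
    · exact ⟨Q, hQne, hQch, by simpa using hQh,
        by rw [hQl, List.getLast?_cons_cons],
        fun l hl => List.mem_cons_of_mem _ (hQm l hl)⟩
    · refine ⟨x :: Q, by simp, ?_, by simp, ?_, ?_⟩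
      · rw [show List.Chain' Alike (x :: Q) ↔ _ from List.isChain_cons]
        refine ⟨fun z hz => ?_, hQch⟩
        rw [hQh] at hz
        simp only [List.head?_cons, Option.mem_some_iff] at hz
        exact hz ▸ h1
      · obtain ⟨q, Q', rfl⟩ : ∃ q Q', Q = q :: Q' := by
          cases Q with
          | nil => exact absurd rfl hQne
          | cons q Q' => exact ⟨q, Q', rfl⟩
        rw [List.getLast?_cons_cons, hQl, List.getLast?_cons_cons]
      · intro l hl
        rcases List.mem_cons.mp hl with rfl | hl
        · exact List.mem_cons_self
        · exact List.mem_cons_of_mem _ (hQm l hl)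

/-- If `A` has at least four alternatives, `D ⊆ L(A)` is a domain,
`a ∈ A`, and `D` is connected, then `D_{-a}` is connected. -/
theorem connected_restriction [DecidableEq α] (A : Finset α) (hA : 4 ≤ A.card)
    (D : Set (List α)) (hD : ∀ l ∈ D, IsLinOrd A l) (a : α) (ha : a ∈ A)
    (hconn : ConnectedDomain A D) :
    ConnectedDomain (A.erase a) (restrictDom D (A.erase a)) := by
  intro R' hR' T' hT'
  obtain ⟨R, hR, rfl⟩ := hR'
  obtain ⟨T, hT, rfl⟩ := hT'
  obtain ⟨P, ⟨⟨hPne, hPlin, hPch⟩, hPh, hPl⟩, hPD⟩ := hconn R hR T hT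
  set f := fun l => restrictOrd l (A.erase a) with hf
  have hch : (P.map f).Chain' (fun x y => x = y ∨ Alike x y) :=
    (List.isChain_map f).mpr (hPch.imp fun x y h => alike_restrict _ h)
  obtain ⟨Q, hQne, hQch, hQh, hQl, hQm⟩ := path_collapse (P.map f) hch (by simpa using hPne)
  refine ⟨Q, ⟨⟨hQne, ?_, hQch⟩, ?_, ?_⟩, ?_⟩
  · intro l hl
    obtain ⟨p, hp, rfl⟩ := List.mem_map.mp (hQm l hl)
    exact isLinOrd_restrict (hPlin p hp) a
  · rw [hQh, List.head?_map, hPh]; rfl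
  · rw [hQl, List.getLast?_map, hPl]; rfl
  · intro l hl
    obtain ⟨p, hp, rfl⟩ := List.mem_map.mp (hQm l hl)
    exact ⟨p, hPD p hp, rfl⟩
end

section
/- Let D ⊆ L(A) be a peak-pit Condorcet domain and let a, b, c ∈ A be distinct alternatives. Let R, T ∈ D be linear orders such that in R the alternatives a, b, c appear consecutively in the order a, b, c, in T they appear consecutively in the order c, a, b, and R_{A∖{a,b}} = T_{A∖{a,b}}. Let S ∈ L(A) be a linear order in which a, c, b appear consecutively in the order a, c, b and with S_{A∖{a,b}} = R_{A∖{a,b}}. Then D ∪ {S} is a peak-pit Condorcet domain. -/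
/-!
Common definitions for formalizing Condorcet domains.

A linear order on a finite set `A : Finset α` of alternatives is encoded as a
duplicate-free list enumerating the elements of `A` from most preferred (head)
to least preferred (last).
-/

variable {α : Type*}

lemma aux_cancel [DecidableEq α] {c : α} : ∀ {l₁ l₃ l₂ l₄ : List α},
    l₁ ++ c :: l₂ = l₃ ++ c :: l₄ → c ∉ l₁ → c ∉ l₃ → l₁ = l₃ ∧ l₂ = l₄ := by
  intro l₁
  induction l₁ with
  | nil =>
    intro l₃ l₂ l₄ h h1 h3
    cases l₃ with
    | nil => simpa using h
    | cons x t =>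
      exfalso
      simp only [List.nil_append, List.cons_append, List.cons.injEq] at h
      exact h3 (by simp [← h.1])
  | cons x t ih =>
    intro l₃ l₂ l₄ h h1 h3
    cases l₃ with
    | nil =>
      exfalso
      simp only [List.nil_append, List.cons_append, List.cons.injEq] at h
      exact h1 (by simp [h.1])
    | cons y t' =>
      simp only [List.cons_append, List.cons.injEq] at h
      obtain ⟨rfl, h'⟩ := h
      have := ih h' (fun hc => h1 (List.mem_cons_of_mem _ hc))
        (fun hc => h3 (List.mem_cons_of_mem _ hc))
      exact ⟨by rw [this.1], this.2⟩

lemma triple_facts [DecidableEq α] {A : Finset α} {u v : List α} {p q r : α}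
    (h : IsLinOrd A (u ++ p :: q :: r :: v)) :
    (∀ x ∈ u, x ∈ A) ∧ (∀ x ∈ v, x ∈ A) ∧
    p ∉ u ∧ q ∉ u ∧ r ∉ u ∧ p ∉ v ∧ q ∉ v ∧ r ∉ v := by
  obtain ⟨hnd, hA⟩ := h
  have hmem : ∀ x ∈ u ++ p :: q :: r :: v, x ∈ A := by
    intro x hx; rw [← hA, List.mem_toFinset]; exact hx
  rw [List.nodup_append] at hnd
  obtain ⟨hu, ht, hdisj⟩ := hnd
  simp only [List.nodup_cons, List.mem_cons, not_or] at ht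
  refine ⟨fun x hx => hmem x (by simp; tauto), fun x hx => hmem x (by simp; tauto),
    fun h => hdisj _ h _ (by simp) rfl, fun h => hdisj _ h _ (by simp) rfl, fun h => hdisj _ h _ (by simp) rfl,
    ?_, ?_, ?_⟩ <;> tauto

lemma filter_eq_self_of [DecidableEq α] {X : Finset α} {u : List α}
    (h : ∀ x ∈ u, x ∈ X) :
    u.filter (fun x => decide (x ∈ X)) = u := by
  rw [List.filter_eq_self]
  intro x hx
  simpa using h x hx

/-- Let `D ⊆ L(A)` be a peak-pit Condorcet domain, `a,b,c ∈ A`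
distinct, and let `R = ⋯abc⋯` and `T = ⋯cab⋯` be members of `D` with
`R_{A∖{a,b}} = T_{A∖{a,b}}`.  If `S = ⋯acb⋯` is a linear order on `A` with
`S_{A∖{a,b}} = R_{A∖{a,b}}`, then `D ∪ {S}` is a peak-pit Condorcet domain. -/
theorem union_single_peakPit [DecidableEq α] (A : Finset α)
    (D : Set (List α)) (hD : IsPeakPitDomain A D) (a b c : α)
    (ha : a ∈ A) (hb : b ∈ A) (hc : c ∈ A)
    (hab : a ≠ b) (hac : a ≠ c) (hbc : b ≠ c)
    (R T S : List α) (hR : R ∈ D) (hT : T ∈ D)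
    (hRform : ∃ u v : List α, R = u ++ a :: b :: c :: v)
    (hTform : ∃ u v : List α, T = u ++ c :: a :: b :: v)
    (hRT : restrictOrd R (A \ {a, b}) = restrictOrd T (A \ {a, b}))
    (hS : IsLinOrd A S)
    (hSform : ∃ u v : List α, S = u ++ a :: c :: b :: v)
    (hSR : restrictOrd S (A \ {a, b}) = restrictOrd R (A \ {a, b})) :
    IsPeakPitDomain A (D ∪ {S}) := by
  classical
  obtain ⟨hDlin, hDcond⟩ := hD
  obtain ⟨u, v, rfl⟩ := hRform
  obtain ⟨u', v', rfl⟩ := hTform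
  obtain ⟨w, w', rfl⟩ := hSform
  have hRlin := hDlin _ hR
  have hTlin := hDlin _ hT
  obtain ⟨huA, hvA, hau, hbu, hcu, hav, hbv, hcv⟩ := triple_facts hRlin
  obtain ⟨hu'A, hv'A, hcu', hau', hbu', hcv', hav', hbv'⟩ := triple_facts hTlin
  obtain ⟨hwA, hw'A, haw, hcw, hbw, haw', hcw', hbw'⟩ := triple_facts hS
  -- restriction of sides to A \ {a,b}
  have hfil : ∀ (L : List α), (∀ x ∈ L, x ∈ A) → a ∉ L → b ∉ L →
      L.filter (fun x => decide (x ∈ A \ ({a, b} : Finset α))) = L := by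
    intro L h1 h2 h3
    apply filter_eq_self_of
    intro x hx
    simp only [Finset.mem_sdiff, Finset.mem_insert, Finset.mem_singleton]
    exact ⟨h1 x hx, by rintro (rfl | rfl) <;> [exact h2 hx; exact h3 hx]⟩
  have hcX : c ∈ A \ ({a, b} : Finset α) := by
    simp [hc, Ne.symm hac, Ne.symm hbc]
  have haX : a ∉ A \ ({a, b} : Finset α) := by simp
  have hbX : b ∉ A \ ({a, b} : Finset α) := by simp
  have hRres : restrictOrd (u ++ a :: b :: c :: v) (A \ {a, b}) = u ++ c :: v := by
    unfold restrictOrd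
    rw [List.filter_append, hfil u huA hau hbu,
      List.filter_cons_of_neg (by simpa using haX),
      List.filter_cons_of_neg (by simpa using hbX),
      List.filter_cons_of_pos (by simpa using hcX),
      hfil v hvA hav hbv]
  have hTres : restrictOrd (u' ++ c :: a :: b :: v') (A \ {a, b}) = u' ++ c :: v' := by
    unfold restrictOrd
    rw [List.filter_append, hfil u' hu'A hau' hbu',
      List.filter_cons_of_pos (by simpa using hcX),
      List.filter_cons_of_neg (by simpa using haX),
      List.filter_cons_of_neg (by simpa using hbX),
      hfil v' hv'A hav' hbv']
  have hSres : restrictOrd (w ++ a :: c :: b :: w') (A \ {a, b}) = w ++ c :: w' := by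
    unfold restrictOrd
    rw [List.filter_append, hfil w hwA haw hbw,
      List.filter_cons_of_neg (by simpa using haX),
      List.filter_cons_of_pos (by simpa using hcX),
      List.filter_cons_of_neg (by simpa using hbX),
      hfil w' hw'A haw' hbw']
  rw [hRres, hTres] at hRT
  rw [hSres, hRres] at hSR
  obtain ⟨rfl, rfl⟩ := aux_cancel hRT hcu hcu'
  obtain ⟨rfl, rfl⟩ := aux_cancel hSR.symm hcu hcw
  -- now R = u ++ a::b::c::v, S = u ++ a::c::b::v, T = u ++ c::a::b::v
  -- restrictions of S to triples missing one of a,b,c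
  have hSRtr : ∀ X : Finset α, b ∉ X ∨ c ∉ X →
      restrictOrd (u ++ a :: c :: b :: v) X = restrictOrd (u ++ a :: b :: c :: v) X := by
    intro X hX
    unfold restrictOrd
    rw [List.filter_append, List.filter_append]
    congr 1
    rcases hX with hX | hX <;> simp [List.filter_cons, hX]
  have hSTtr : ∀ X : Finset α, a ∉ X →
      restrictOrd (u ++ a :: c :: b :: v) X = restrictOrd (u ++ c :: a :: b :: v) X := by
    intro X hX
    unfold restrictOrd
    rw [List.filter_append, List.filter_append]
    congr 1
    simp [List.filter_cons, hX]
  -- restrictions to the triple {a,b,c}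
  have hfil0 : ∀ (L : List α), a ∉ L → b ∉ L → c ∉ L →
      L.filter (fun x => decide (x ∈ ({a, b, c} : Finset α))) = [] := by
    intro L h1 h2 h3
    rw [List.filter_eq_nil_iff]
    intro x hx
    simp only [Finset.mem_insert, Finset.mem_singleton, decide_eq_true_eq, not_or]
    refine ⟨?_, ?_, ?_⟩ <;> rintro rfl <;> [exact h1 hx; exact h2 hx; exact h3 hx]
  have haT : a ∈ ({a, b, c} : Finset α) := by simp
  have hbT : b ∈ ({a, b, c} : Finset α) := by simp
  have hcT : c ∈ ({a, b, c} : Finset α) := by simp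
  have hRabc : restrictOrd (u ++ a :: b :: c :: v) ({a, b, c}) = [a, b, c] := by
    unfold restrictOrd
    rw [List.filter_append, hfil0 u hau hbu hcu,
      List.filter_cons_of_pos (by simpa using haT),
      List.filter_cons_of_pos (by simpa using hbT),
      List.filter_cons_of_pos (by simpa using hcT),
      hfil0 v hav hbv hcv]
    simp
  have hTabc : restrictOrd (u ++ c :: a :: b :: v) ({a, b, c}) = [c, a, b] := by
    unfold restrictOrd
    rw [List.filter_append, hfil0 u hau hbu hcu,
      List.filter_cons_of_pos (by simpa using hcT),
      List.filter_cons_of_pos (by simpa using haT),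
      List.filter_cons_of_pos (by simpa using hbT),
      hfil0 v hav hbv hcv]
    simp
  have hSabc : restrictOrd (u ++ a :: c :: b :: v) ({a, b, c}) = [a, c, b] := by
    unfold restrictOrd
    rw [List.filter_append, hfil0 u hau hbu hcu,
      List.filter_cons_of_pos (by simpa using haT),
      List.filter_cons_of_pos (by simpa using hcT),
      List.filter_cons_of_pos (by simpa using hbT),
      hfil0 v hav hbv hcv]
    simp
  constructor
  · intro l hl
    rcases hl with hl | hl
    · exact hDlin l hl
    · rw [Set.mem_singleton_iff] at hl
      subst hl
      exact hS
  · intro x y z hx hy hz hxy hxz hyz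
    by_cases htr : a ∈ ({x, y, z} : Finset α) ∧ b ∈ ({x, y, z} : Finset α) ∧
        c ∈ ({x, y, z} : Finset α)
    · -- the triple is {a,b,c}
      have hset : ({x, y, z} : Finset α) = {a, b, c} := by
        refine (Finset.eq_of_subset_of_card_le ?_ ?_).symm
        · intro t ht
          simp only [Finset.mem_insert, Finset.mem_singleton] at ht
          rcases ht with rfl | rfl | rfl
          exacts [htr.1, htr.2.1, htr.2.2]
        · rw [Finset.card_insert_of_notMem (by simp [hxy, hxz]),
            Finset.card_insert_of_notMem (by simp [hyz]), Finset.card_singleton,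
            Finset.card_insert_of_notMem (by simp [hab, hac]),
            Finset.card_insert_of_notMem (by simp [hbc]), Finset.card_singleton]
      obtain ⟨w0, hw0, hcond⟩ := hDcond a b c ha hb hc hab hac hbc
      simp only [Finset.mem_insert, Finset.mem_singleton] at hw0
      rcases hcond with h0 | h2
      · -- never-top: w0 must be b
        have hna : w0 ≠ a := by
          have := h0 (restrictOrd (u ++ a :: b :: c :: v) {a, b, c}) ⟨_, hR, rfl⟩
          rw [hRabc] at this
          simp only [List.getElem?_cons_zero, Fin.val_zero, ne_eq, Option.some.injEq] at this
          exact fun h => this (by rw [h])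
        have hnc : w0 ≠ c := by
          have := h0 (restrictOrd (u ++ c :: a :: b :: v) {a, b, c}) ⟨_, hT, rfl⟩
          rw [hTabc] at this
          simp only [List.getElem?_cons_zero, Fin.val_zero, ne_eq, Option.some.injEq] at this
          exact fun h => this (by rw [h])
        have hwb : w0 = b := by tauto
        refine ⟨b, by rw [hset]; exact hbT, Or.inl ?_⟩
        rw [hset]
        rintro l ⟨m, hm, rfl⟩
        rcases hm with hm | hm
        · have := h0 (restrictOrd m {a, b, c}) ⟨m, hm, rfl⟩
          rw [hwb] at this
          exact this
        · rw [Set.mem_singleton_iff] at hm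
          subst hm
          simp [hSabc, hab]
      · -- never-bottom: w0 must be a
        have hnc : w0 ≠ c := by
          have := h2 (restrictOrd (u ++ a :: b :: c :: v) {a, b, c}) ⟨_, hR, rfl⟩
          rw [hRabc] at this
          simp only [ne_eq, Option.some.injEq] at this
          exact fun h => this (by rw [h]; rfl)
        have hnb : w0 ≠ b := by
          have := h2 (restrictOrd (u ++ c :: a :: b :: v) {a, b, c}) ⟨_, hT, rfl⟩
          rw [hTabc] at this
          simp only [ne_eq, Option.some.injEq] at this
          exact fun h => this (by rw [h]; rfl)
        have hwa : w0 = a := by tauto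
        refine ⟨a, by rw [hset]; exact haT, Or.inr ?_⟩
        rw [hset]
        rintro l ⟨m, hm, rfl⟩
        rcases hm with hm | hm
        · have := h2 (restrictOrd m {a, b, c}) ⟨m, hm, rfl⟩
          rw [hwa] at this
          exact this
        · rw [Set.mem_singleton_iff] at hm
          subst hm
          simp [hSabc, Ne.symm hab]
    · -- the triple misses one of a,b,c; S restricts like R or T
      have hmemS : restrictOrd (u ++ a :: c :: b :: v) ({x, y, z} : Finset α) ∈
          restrictDom D ({x, y, z} : Finset α) := by
        by_cases ha' : a ∈ ({x, y, z} : Finset α)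
        · have hbc' : b ∉ ({x, y, z} : Finset α) ∨ c ∉ ({x, y, z} : Finset α) := by tauto
          rw [hSRtr _ hbc']
          exact ⟨_, hR, rfl⟩
        · rw [hSTtr _ ha']
          exact ⟨_, hT, rfl⟩
      obtain ⟨w0, hw0, hcond⟩ := hDcond x y z hx hy hz hxy hxz hyz
      refine ⟨w0, hw0, ?_⟩
      rcases hcond with h0 | h2
      · refine Or.inl ?_
        rintro l ⟨m, hm, rfl⟩
        rcases hm with hm | hm
        · exact h0 _ ⟨m, hm, rfl⟩
        · rw [Set.mem_singleton_iff] at hm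
          subst hm
          exact h0 _ hmemS
      · refine Or.inr ?_
        rintro l ⟨m, hm, rfl⟩
        rcases hm with hm | hm
        · exact h2 _ ⟨m, hm, rfl⟩
        · rw [Set.mem_singleton_iff] at hm
          subst hm
          exact h2 _ hmemS
end

section
/- Let D ⊆ L(A) be a peak-pit Condorcet domain and let 𝒜 and ℬ be equivalent paths of alike linear orders such that D ∪ K(𝒜) is a peak-pit Condorcet domain. Then D ∪ K(ℬ) is also a peak-pit Condorcet domain, and it satisfies exactly the same set of never-conditions as D ∪ K(𝒜) (that is, for every triple of distinct alternatives a,b,c ∈ A and every never-condition, (D ∪ K(ℬ))_{{a,b,c}} satisfies it if and only if (D ∪ K(𝒜))_{{a,b,c}} does). -/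
/-!
Common definitions for formalizing Condorcet domains.

A linear order on a finite set `A : Finset α` of alternatives is encoded as a
duplicate-free list enumerating the elements of `A` from most preferred (head)
to least preferred (last).
-/

variable {α : Type*}

section Aux

variable [DecidableEq α]

/-- Apply the swap of the two elements of `p` to `l`, provided both lie in `S`. -/
def stepS (S : Finset α) (p : Sym2 α) (l : List α) : List α :=
  Sym2.lift ⟨fun x y => if x ∈ S ∧ y ∈ S then l.map (Equiv.swap x y) else l,
    fun x y => by dsimp only; rw [Equiv.swap_comm]; simp [and_comm]⟩ p

lemma stepS_mk (S : Finset α) (x y : α) (l : List α) :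
    stepS S s(x, y) l = if x ∈ S ∧ y ∈ S then l.map (Equiv.swap x y) else l := rfl

/-- The list of successive restricted orders obtained from `l` by a sequence of
switching pairs. -/
def reach (S : Finset α) (l : List α) : List (Sym2 α) → List (List α)
  | [] => [l]
  | p :: s => l :: reach S (stepS S p l) s

lemma head_mem_reach (S : Finset α) (l : List α) (s : List (Sym2 α)) :
    l ∈ reach S l s := by
  cases s <;> simp [reach]

lemma stepS_id_of (S : Finset α) (hS : S.card ≤ 3) (p q : Sym2 α) (h : DisjointPair p q) :
    (∀ l, stepS S p l = l) ∨ (∀ l, stepS S q l = l) := by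
  induction p using Sym2.ind with | _ x y =>
  induction q using Sym2.ind with | _ u v =>
  by_cases hxy : x = y
  · left; intro l; subst hxy; rw [stepS_mk]
    split <;> simp
  by_cases huv : u = v
  · right; intro l; subst huv; rw [stepS_mk]
    split <;> simp
  by_cases hx : x ∈ S ∧ y ∈ S
  · by_cases hu : u ∈ S ∧ v ∈ S
    · exfalso
      have hxu : x ≠ u ∧ x ≠ v := by
        have := h x (by simp); simp [Sym2.mem_iff] at this; tauto
      have hyu : y ≠ u ∧ y ≠ v := by
        have := h y (by simp); simp [Sym2.mem_iff] at this; tauto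
      have hsub : ({x, y, u, v} : Finset α) ⊆ S := by
        intro z hz
        simp only [Finset.mem_insert, Finset.mem_singleton] at hz
        rcases hz with rfl | rfl | rfl | rfl
        · exact hx.1
        · exact hx.2
        · exact hu.1
        · exact hu.2
      have hcard : ({x, y, u, v} : Finset α).card = 4 := by
        rw [Finset.card_insert_of_notMem (by simp [hxy, hxu.1, hxu.2]),
            Finset.card_insert_of_notMem (by simp [hyu.1, hyu.2]),
            Finset.card_insert_of_notMem (by simp [huv]),
            Finset.card_singleton]
      have := Finset.card_le_card hsub
      omega
    · right; intro l; rw [stepS_mk, if_neg hu]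
  · left; intro l; rw [stepS_mk, if_neg hx]

lemma reach_swap_mem (S : Finset α) (hS : S.card ≤ 3) (p q : Sym2 α)
    (h : DisjointPair p q) (l m : List α) (s : List (Sym2 α)) :
    m ∈ reach S l (p :: q :: s) ↔ m ∈ reach S l (q :: p :: s) := by
  rcases stepS_id_of S hS p q h with hp | hq
  · simp only [reach, hp, List.mem_cons]
    constructor
    · rintro (rfl | rfl | hm)
      · exact Or.inl rfl
      · exact Or.inl rfl
      · exact Or.inr (Or.inr hm)
    · rintro (rfl | rfl | hm)
      · exact Or.inl rfl
      · exact Or.inr (Or.inr (head_mem_reach _ _ _))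
      · exact Or.inr (Or.inr hm)
  · simp only [reach, hq, List.mem_cons]
    constructor
    · rintro (rfl | rfl | hm)
      · exact Or.inl rfl
      · exact Or.inr (Or.inr (head_mem_reach _ _ _))
      · exact Or.inr (Or.inr hm)
    · rintro (rfl | rfl | hm)
      · exact Or.inl rfl
      · exact Or.inl rfl
      · exact Or.inr (Or.inr hm)

lemma reach_append_congr (S : Finset α) (t₁ t₂ : List (Sym2 α))
    (h : ∀ l m, m ∈ reach S l t₁ ↔ m ∈ reach S l t₂) :
    ∀ (s₁ : List (Sym2 α)) (l m : List α),
      m ∈ reach S l (s₁ ++ t₁) ↔ m ∈ reach S l (s₁ ++ t₂) := by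
  intro s₁
  induction s₁ with
  | nil => exact h
  | cons p s₁ ih =>
    intro l m
    simp only [List.cons_append, reach, List.mem_cons, List.append_eq]
    rw [ih]

lemma reach_adjSwap (S : Finset α) (hS : S.card ≤ 3) {s s' : List (Sym2 α)}
    (h : AdjSwap s s') (l m : List α) :
    m ∈ reach S l s ↔ m ∈ reach S l s' := by
  cases h with
  | swap l₁ l₂ p q hpq =>
    exact reach_append_congr S (p :: q :: l₂) (q :: p :: l₂)
      (fun l m => reach_swap_mem S hS p q hpq l m l₂) l₁ l m

lemma reach_reflTransGen (S : Finset α) (hS : S.card ≤ 3) {s s' : List (Sym2 α)}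
    (h : Relation.ReflTransGen AdjSwap s s') (l m : List α) :
    m ∈ reach S l s ↔ m ∈ reach S l s' := by
  induction h with
  | refl => rfl
  | tail _ hstep ih => exact ih.trans (reach_adjSwap S hS hstep l m)

lemma find?_zip_self (l : List α) :
    (l.zip l).find? (fun p => decide (p.1 ≠ p.2)) = none := by
  induction l with
  | nil => rfl
  | cons a l ih => simp [List.find?]; simpa using ih

lemma switchPair?_eq (l₁ l₂ : List α) (x y : α) (hxy : x ≠ y) :
    switchPair? (l₁ ++ x :: y :: l₂) (l₁ ++ y :: x :: l₂) = some s(x, y) := by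
  unfold switchPair?
  have hz : (l₁ ++ x :: y :: l₂).zip (l₁ ++ y :: x :: l₂) =
      l₁.zip l₁ ++ (x, y) :: (y, x) :: l₂.zip l₂ := by
    rw [List.zip_append (by simp)]
    simp [List.zip_cons_cons]
  rw [hz, List.find?_append, find?_zip_self]
  simp [List.find?, hxy]

lemma restrictOrd_alike (S : Finset α) (l₁ l₂ : List α) (x y : α)
    (hnd : (l₁ ++ x :: y :: l₂).Nodup) :
    restrictOrd (l₁ ++ y :: x :: l₂) S = stepS S s(x, y) (restrictOrd (l₁ ++ x :: y :: l₂) S) := by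
  rw [stepS_mk]
  by_cases h : x ∈ S ∧ y ∈ S
  · rw [if_pos h]
    have hx1 : x ∉ l₁ ∧ x ∉ l₂ := by
      simp [List.nodup_append, List.nodup_cons] at hnd; exact ⟨fun hx => (hnd.2.2 x hx).1 rfl, hnd.2.1.1.2⟩
    have hy1 : y ∉ l₁ ∧ y ∉ l₂ := by
      simp [List.nodup_append, List.nodup_cons] at hnd; exact ⟨fun hy => (hnd.2.2 y hy).2.1 rfl, hnd.2.1.2.1⟩
    have hxy : x ≠ y := by
      simp [List.nodup_append, List.nodup_cons] at hnd; tauto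
    have hfix : ∀ t : List α, x ∉ t → y ∉ t →
        (t.filter (fun z => decide (z ∈ S))).map (Equiv.swap x y) =
          t.filter (fun z => decide (z ∈ S)) := by
      intro t hxt hyt
      rw [List.map_congr_left, List.map_id]
      intro a ha
      have ha' := List.mem_of_mem_filter ha
      exact Equiv.swap_apply_of_ne_of_ne (fun h => hxt (h ▸ ha')) (fun h => hyt (h ▸ ha'))
    simp only [restrictOrd, List.filter_append, List.filter_cons,
      decide_eq_true_eq, h.1, h.2, if_pos, List.map_append, List.map_cons]
    rw [hfix l₁ hx1.1 hy1.1, hfix l₂ hx1.2 hy1.2,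
      Equiv.swap_apply_left, Equiv.swap_apply_right]
  · rw [if_neg h]
    simp only [restrictOrd, List.filter_append, List.filter_cons, decide_eq_true_eq]
    by_cases hx : x ∈ S
    · have hy : y ∉ S := fun hy => h ⟨hx, hy⟩
      simp [hx, hy]
    · by_cases hy : y ∈ S <;> simp [hx, hy]

lemma switchSeq_cons (R U : List α) (rest : List (List α)) (p : Sym2 α)
    (h : switchPair? R U = some p) :
    switchSeq (R :: U :: rest) = p :: switchSeq (U :: rest) := by
  simp [switchSeq, List.zip_cons_cons, List.filterMap_cons, h]

lemma path_map_reach (S : Finset α) :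
    ∀ (P : List (List α)) (R : List α),
      (R :: P).Chain' Alike → (∀ l ∈ R :: P, l.Nodup) →
      (R :: P).map (fun l => restrictOrd l S) = reach S (restrictOrd R S) (switchSeq (R :: P)) := by
  intro P
  induction P with
  | nil =>
    intro R _ _
    simp [switchSeq, reach]
  | cons U rest ih =>
    intro R hchain hnd
    have halike : Alike R U := (List.isChain_cons_cons.mp hchain).1
    obtain ⟨m₁, m₂, x, y, hxy, hR, hU⟩ := halike
    have hp : switchPair? R U = some s(x, y) := by
      rw [hR, hU]; exact switchPair?_eq m₁ m₂ x y hxy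
    rw [switchSeq_cons R U rest _ hp]
    have hstep : stepS S s(x, y) (restrictOrd R S) = restrictOrd U S := by
      rw [hR, hU]
      exact (restrictOrd_alike S m₁ m₂ x y (hR ▸ hnd R (by simp))).symm
    simp only [List.map_cons, reach, hstep]
    congr 1
    exact ih U (List.isChain_cons_cons.mp hchain).2 (fun l hl => hnd l (List.mem_cons_of_mem _ hl))

lemma restrictDom_mem_list (S : Finset α) (P : List (List α)) :
    restrictDom {l | l ∈ P} S = {m | m ∈ P.map (fun l => restrictOrd l S)} := by
  ext m
  simp [restrictDom, Set.mem_image, List.mem_map, eq_comm]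

lemma key_restrict_eq (A : Finset α) (S : Finset α) (hS : S.card ≤ 3)
    (R T : List α) (P Q : List (List α))
    (hP : IsPath A P R T) (hQ : IsPath A Q R T) (hequiv : PathEquiv P Q) :
    restrictDom {l | l ∈ Q} S = restrictDom {l | l ∈ P} S := by
  obtain ⟨P', rfl⟩ : ∃ P', P = R :: P' := by
    cases P with
    | nil => exact absurd hP.2.1 (by simp)
    | cons a P' =>
      have := hP.2.1
      simp [List.head?] at this
      exact ⟨P', by rw [this]⟩
  obtain ⟨Q', rfl⟩ : ∃ Q', Q = R :: Q' := by
    cases Q with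
    | nil => exact absurd hQ.2.1 (by simp)
    | cons a Q' =>
      have := hQ.2.1
      simp [List.head?] at this
      exact ⟨Q', by rw [this]⟩
  rw [restrictDom_mem_list, restrictDom_mem_list,
    path_map_reach S P' R hP.1.2.2 (fun l hl => (hP.1.2.1 l hl).1),
    path_map_reach S Q' R hQ.1.2.2 (fun l hl => (hQ.1.2.1 l hl).1)]
  ext m
  exact reach_reflTransGen S hS hequiv (restrictOrd R S) m |>.symm

lemma card_triple_le (a b c : α) : ({a, b, c} : Finset α).card ≤ 3 := by
  refine le_trans (Finset.card_insert_le _ _) ?_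
  refine Nat.succ_le_succ (le_trans (Finset.card_insert_le _ _) ?_)
  simp

end Aux

/-- Let `D ⊆ L(A)` be a peak-pit Condorcet domain and let `𝒜`
and `ℬ` be equivalent paths of alike linear orders (connecting the same pair of
linear orders) such that `D ∪ K(𝒜)` is a peak-pit Condorcet domain.  Then
`D ∪ K(ℬ)` is a peak-pit Condorcet domain satisfying exactly the same set of
never-conditions as `D ∪ K(𝒜)`. -/
theorem equiv_path_union_peakPit [DecidableEq α] (A : Finset α)
    (D : Set (List α)) (hD : IsPeakPitDomain A D)
    (R T : List α) (P Q : List (List α))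
    (hP : IsPath A P R T) (hQ : IsPath A Q R T) (hequiv : PathEquiv P Q)
    (hPA : IsPeakPitDomain A (D ∪ {l | l ∈ P})) :
    IsPeakPitDomain A (D ∪ {l | l ∈ Q}) ∧
      ∀ a b c : α, a ∈ A → b ∈ A → c ∈ A → a ≠ b → a ≠ c → b ≠ c →
        ∀ x ∈ ({a, b, c} : Finset α), ∀ k : Fin 3,
          (NeverCond (restrictDom (D ∪ {l | l ∈ Q}) {a, b, c}) x k ↔
            NeverCond (restrictDom (D ∪ {l | l ∈ P}) {a, b, c}) x k) := by
  have hrest : ∀ a b c : α,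
      restrictDom (D ∪ {l | l ∈ Q}) {a, b, c} = restrictDom (D ∪ {l | l ∈ P}) {a, b, c} := by
    intro a b c
    have := key_restrict_eq A {a, b, c} (card_triple_le a b c) R T P Q hP hQ hequiv
    simp only [restrictDom, Set.image_union] at *
    rw [this]
  constructor
  · constructor
    · intro l hl
      rcases hl with hl | hl
      · exact hD.1 l hl
      · exact hQ.1.2.1 l hl
    · intro a b c ha hb hc hab hac hbc
      obtain ⟨x, hx, hcond⟩ := hPA.2 a b c ha hb hc hab hac hbc
      exact ⟨x, hx, by rw [hrest a b c]; exact hcond⟩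
  · intro a b c _ _ _ _ _ _ x _ k
    rw [hrest a b c]
end
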